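/- Let m, n be positive integers and let P be an m×n real matrix with nonnegative entries such that every row of P sums to 1/m and every column of P sums to 1/n. Set τ = 1/(2·min(m,n)) and define the selected set S = {(i,j) : P(i,j) > τ}. Then S is a one-to-one correspondence (the graph of a partial injection): whenever (i,j) ∈ S and (i,j') ∈ S one has j = j', and whenever (i,j) ∈ S and (i',j) ∈ S one has i = i'. -/
import Mathlib


theorem stmt_2 (m n : ℕ) (hm : 0 < m) (hn : 0 < n)
    (P : Fin m → Fin n → ℝ)
    (hP : ∀ i j, 0 ≤ P i j)
    (hrow : ∀ i, ∑ j, P i j = 1 / m)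
    (hcol : ∀ j, ∑ i, P i j = 1 / n) :
    (∀ (i : Fin m) (j j' : Fin n),
        P i j > 1 / (2 * min m n) → P i j' > 1 / (2 * min m n) → j = j') ∧
    (∀ (i i' : Fin m) (j : Fin n),
        P i j > 1 / (2 * min m n) → P i' j > 1 / (2 * min m n) → i = i') := by
  have hmin : (0:ℝ) < (min m n : ℕ) := by
    exact_mod_cast Nat.lt_min.mpr ⟨hm, hn⟩
  have hτm : 1 / (2 * (m:ℝ)) ≤ 1 / (2 * ((min m n : ℕ) : ℝ)) := by
    apply one_div_le_one_div_of_le (by positivity)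
    have : ((min m n : ℕ) : ℝ) ≤ (m:ℝ) := by exact_mod_cast Nat.min_le_left m n
    linarith
  have hτn : 1 / (2 * (n:ℝ)) ≤ 1 / (2 * ((min m n : ℕ) : ℝ)) := by
    apply one_div_le_one_div_of_le (by positivity)
    have : ((min m n : ℕ) : ℝ) ≤ (n:ℝ) := by exact_mod_cast Nat.min_le_right m n
    linarith
  constructor
  · intro i j j' hj hj'
    by_contra hne
    have hsub : ({j, j'} : Finset (Fin n)) ⊆ Finset.univ := Finset.subset_univ _
    have hpair : P i j + P i j' ≤ ∑ k, P i k := by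
      have := Finset.sum_le_sum_of_subset_of_nonneg hsub
        (fun k _ _ => hP i k)
      rwa [Finset.sum_pair hne] at this
    rw [hrow i] at hpair
    have h1 : 1 / (2 * (m:ℝ)) < P i j := lt_of_le_of_lt hτm hj
    have h2 : 1 / (2 * (m:ℝ)) < P i j' := lt_of_le_of_lt hτm hj'
    have hm' : (0:ℝ) < m := by exact_mod_cast hm
    have : 1 / (m:ℝ) = 1 / (2*m) + 1 / (2*m) := by field_simp; ring
    linarith
  · intro i i' j hi hi'
    by_contra hne
    have hsub : ({i, i'} : Finset (Fin m)) ⊆ Finset.univ := Finset.subset_univ _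
    have hpair : P i j + P i' j ≤ ∑ k, P k j := by
      have := Finset.sum_le_sum_of_subset_of_nonneg hsub
        (fun k _ _ => hP k j)
      rwa [Finset.sum_pair hne] at this
    rw [hcol j] at hpair
    have h1 : 1 / (2 * (n:ℝ)) < P i j := lt_of_le_of_lt hτn hi
    have h2 : 1 / (2 * (n:ℝ)) < P i' j := lt_of_le_of_lt hτn hi'
    have hn' : (0:ℝ) < n := by exact_mod_cast hn
    have : 1 / (n:ℝ) = 1 / (2*n) + 1 / (2*n) := by field_simp; ring
    linarith
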